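/- Fix real numbers α, η, β with 1 < α < η < β, and real numbers N > 0, A > 0, B ≤ 0. (a) If c ≥ 0 then φ_c has no critical points in (0,∞). (b) If c < 0 then φ_c has exactly one critical point t⁺ ∈ (0,∞); moreover φ_c″(t⁺) > 0 and t⁺ is a strict global minimizer of φ_c on (0,∞). -/

import Mathlib

/-- The fibering map `φ_c(t) = ((t^η/η)N − (t^β/β)B − c)/((t^α/α)A)` on `(0,∞)`. -/
noncomputable def fib (α η β N A B c : ℝ) : ℝ → ℝ :=
  fun t => ((t ^ η / η) * N - (t ^ β / β) * B - c) / ((t ^ α / α) * A)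

/-- Auxiliary function whose sign is the sign of `φ_c'`. -/
noncomputable def hfun (α η β N B c : ℝ) : ℝ → ℝ :=
  fun t => N * (η - α) / (α * η) * t ^ η - B * (β - α) / (α * β) * t ^ β + c

lemma fib_hasDerivAt (α η β N A B c : ℝ) (h1 : 1 < α) (h2 : α < η) (h3 : η < β)
    (hA : 0 < A) (t : ℝ) (ht : 0 < t) :
    HasDerivAt (fib α η β N A B c)
      (α ^ 2 * hfun α η β N B c t / (A * t ^ (α + 1))) t := by
  have hα0 : (0:ℝ) < α := by linarith
  have hη0 : (0:ℝ) < η := by linarith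
  have hβ0 : (0:ℝ) < β := by linarith
  have hd1 : HasDerivAt (fun t : ℝ => t ^ η) (η * t ^ (η - 1)) t :=
    Real.hasDerivAt_rpow_const (Or.inl ht.ne')
  have hd2 : HasDerivAt (fun t : ℝ => t ^ β) (β * t ^ (β - 1)) t :=
    Real.hasDerivAt_rpow_const (Or.inl ht.ne')
  have hd3 : HasDerivAt (fun t : ℝ => t ^ α) (α * t ^ (α - 1)) t :=
    Real.hasDerivAt_rpow_const (Or.inl ht.ne')
  have hnum : HasDerivAt (fun t : ℝ => (t ^ η / η) * N - (t ^ β / β) * B - c)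
      (η * t ^ (η - 1) / η * N - β * t ^ (β - 1) / β * B) t :=
    (((hd1.div_const η).mul_const N).sub ((hd2.div_const β).mul_const B)).sub_const c
  have hden : HasDerivAt (fun t : ℝ => (t ^ α / α) * A) (α * t ^ (α - 1) / α * A) t :=
    (hd3.div_const α).mul_const A
  have htα : (0:ℝ) < t ^ α := Real.rpow_pos_of_pos ht α
  have hden_ne : (t ^ α / α) * A ≠ 0 := by positivity
  have H := hnum.div hden hden_ne
  refine H.congr_deriv ?_
  unfold hfun
  rw [Real.rpow_sub ht, Real.rpow_sub ht, Real.rpow_sub ht, Real.rpow_add ht, Real.rpow_one]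
  have hβt : (0:ℝ) < t ^ β := Real.rpow_pos_of_pos ht β
  have hηt : (0:ℝ) < t ^ η := Real.rpow_pos_of_pos ht η
  field_simp
  ring

lemma deriv_fib_eq (α η β N A B c : ℝ) (h1 : 1 < α) (h2 : α < η) (h3 : η < β)
    (hA : 0 < A) (t : ℝ) (ht : 0 < t) :
    deriv (fib α η β N A B c) t = α ^ 2 * hfun α η β N B c t / (A * t ^ (α + 1)) :=
  (fib_hasDerivAt α η β N A B c h1 h2 h3 hA t ht).deriv

lemma hfun_strictMonoOn (α η β N B c : ℝ) (h1 : 1 < α) (h2 : α < η) (h3 : η < β)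
    (hN : 0 < N) (hB : B ≤ 0) : StrictMonoOn (hfun α η β N B c) (Set.Ici 0) := by
  intro x hx y hy hxy
  have hη0 : (0:ℝ) < η := by linarith
  have hβ0 : (0:ℝ) < β := by linarith
  have hC1 : 0 < N * (η - α) / (α * η) := by
    apply div_pos <;> nlinarith
  have hC2 : 0 ≤ -(B * (β - α) / (α * β)) := by
    rw [neg_nonneg]
    apply div_nonpos_of_nonpos_of_nonneg <;> nlinarith
  have h1' : x ^ η < y ^ η := Real.rpow_lt_rpow hx hxy hη0
  have h2' : x ^ β ≤ y ^ β := Real.rpow_le_rpow hx hxy.le hβ0.le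
  unfold hfun
  nlinarith [mul_le_mul_of_nonneg_left h2' hC2, mul_lt_mul_of_pos_left h1' hC1]

lemma hfun_continuous (α η β N B c : ℝ) (hη : 0 < η) (hβ : 0 < β) :
    Continuous (hfun α η β N B c) := by
  have cη : Continuous fun t : ℝ => t ^ η := by
    rw [continuous_iff_continuousAt]
    exact fun x => Real.continuousAt_rpow_const x η (Or.inr hη.le)
  have cβ : Continuous fun t : ℝ => t ^ β := by
    rw [continuous_iff_continuousAt]
    exact fun x => Real.continuousAt_rpow_const x β (Or.inr hβ.le)
  unfold hfun
  fun_prop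

/-- For `N > 0`, `A > 0`, `B ≤ 0`:
(a) if `c ≥ 0` then `φ_c` has no critical point in `(0,∞)`;
(b) if `c < 0` then `φ_c` has a unique critical point `t⁺ > 0`, which satisfies
`φ_c″(t⁺) > 0` and is a strict global minimizer of `φ_c` on `(0,∞)`. -/
theorem stmt5 (α η β N A B : ℝ) (h1 : 1 < α) (h2 : α < η) (h3 : η < β)
    (hN : 0 < N) (hA : 0 < A) (hB : B ≤ 0) :
    (∀ c : ℝ, 0 ≤ c → ∀ t : ℝ, 0 < t → deriv (fib α η β N A B c) t ≠ 0) ∧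
    (∀ c : ℝ, c < 0 → ∃ tp : ℝ, 0 < tp ∧ deriv (fib α η β N A B c) tp = 0 ∧
      (∀ t : ℝ, 0 < t → deriv (fib α η β N A B c) t = 0 → t = tp) ∧
      0 < deriv (deriv (fib α η β N A B c)) tp ∧
      ∀ s : ℝ, 0 < s → s ≠ tp → fib α η β N A B c tp < fib α η β N A B c s) := by
  have hα0 : (0:ℝ) < α := by linarith
  have hη0 : (0:ℝ) < η := by linarith
  have hβ0 : (0:ℝ) < β := by linarith
  have hC1 : 0 < N * (η - α) / (α * η) := by apply div_pos <;> nlinarith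
  have hC2 : 0 ≤ -(B * (β - α) / (α * β)) := by
    rw [neg_nonneg]; apply div_nonpos_of_nonpos_of_nonneg <;> nlinarith
  -- sign of hfun at positive t when c ≥ 0
  constructor
  · intro c hc t ht
    have htη : (0:ℝ) < t ^ η := Real.rpow_pos_of_pos ht η
    have htβ : (0:ℝ) < t ^ β := Real.rpow_pos_of_pos ht β
    have hpos : 0 < hfun α η β N B c t := by
      unfold hfun
      nlinarith [mul_le_mul_of_nonneg_left htβ.le hC2]
    rw [deriv_fib_eq α η β N A B c h1 h2 h3 hA t ht]
    have : (0:ℝ) < t ^ (α+1) := Real.rpow_pos_of_pos ht _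
    positivity
  · intro c hc
    set C1 := N * (η - α) / (α * η) with hC1def
    -- hfun 0 = c
    have hf0 : hfun α η β N B c 0 = c := by
      unfold hfun
      rw [Real.zero_rpow hη0.ne', Real.zero_rpow hβ0.ne']
      ring
    -- find T with hfun T ≥ 1
    set T : ℝ := ((1 - c) / C1) ^ η⁻¹ with hTdef
    have hTbase : 0 < (1 - c) / C1 := by apply div_pos <;> linarith
    have hT0 : 0 < T := Real.rpow_pos_of_pos hTbase _
    have hTη : T ^ η = (1 - c) / C1 := Real.rpow_inv_rpow hTbase.le hη0.ne'
    have hfT : 0 < hfun α η β N B c T := by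
      have hTβ : (0:ℝ) < T ^ β := Real.rpow_pos_of_pos hT0 β
      unfold hfun
      rw [hTη, ← hC1def]
      have : C1 * ((1 - c) / C1) = 1 - c := by field_simp
      nlinarith [mul_le_mul_of_nonneg_left hTβ.le hC2]
    -- IVT
    have hcont := hfun_continuous α η β N B c hη0 hβ0
    have hivt := intermediate_value_Icc (le_of_lt hT0) hcont.continuousOn
    have h0mem : (0:ℝ) ∈ Set.Icc (hfun α η β N B c 0) (hfun α η β N B c T) := by
      rw [hf0]; exact ⟨hc.le, hfT.le⟩
    obtain ⟨tp, htpmem, htp⟩ := hivt h0mem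
    have htpne : tp ≠ 0 := by
      intro h; rw [h, hf0] at htp; exact hc.ne htp
    have htp0 : 0 < tp := lt_of_le_of_ne htpmem.1 (Ne.symm htpne)
    have hmono := hfun_strictMonoOn α η β N B c h1 h2 h3 hN hB
    -- sign of hfun: neg below tp, pos above
    have hsign : ∀ x : ℝ, 0 < x → (x < tp → hfun α η β N B c x < 0) ∧
        (tp < x → 0 < hfun α η β N B c x) := by
      intro x hx
      constructor
      · intro hlt
        have := hmono (Set.mem_Ici.mpr hx.le) (Set.mem_Ici.mpr htp0.le) hlt
        linarith [htp]
      · intro hlt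
        have := hmono (Set.mem_Ici.mpr htp0.le) (Set.mem_Ici.mpr hx.le) hlt
        linarith [htp]
    refine ⟨tp, htp0, ?_, ?_, ?_, ?_⟩
    · rw [deriv_fib_eq α η β N A B c h1 h2 h3 hA tp htp0, htp]
      simp
    · intro t ht hdt
      rw [deriv_fib_eq α η β N A B c h1 h2 h3 hA t ht] at hdt
      have htα : (0:ℝ) < t ^ (α+1) := Real.rpow_pos_of_pos ht _
      have hht : hfun α η β N B c t = 0 := by
        have hne : A * t ^ (α+1) ≠ 0 := by positivity
        have := (div_eq_zero_iff.mp hdt).resolve_right hne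
        have hα2 : (α:ℝ)^2 ≠ 0 := by positivity
        exact (mul_eq_zero.mp this).resolve_left hα2
      exact hmono.injOn (Set.mem_Ici.mpr ht.le) (Set.mem_Ici.mpr htp0.le) (by rw [hht, htp])
    · -- second derivative
      have hEq : deriv (fib α η β N A B c) =ᶠ[nhds tp]
          fun t => α ^ 2 * hfun α η β N B c t / (A * t ^ (α + 1)) := by
        filter_upwards [Ioi_mem_nhds htp0] with x hx
        exact deriv_fib_eq α η β N A B c h1 h2 h3 hA x hx
      rw [hEq.deriv_eq]
      -- derivative of the simplified expression at tp
      have hdh : HasDerivAt (fun t => α ^ 2 * hfun α η β N B c t)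
          (α ^ 2 * (N * (η - α) / (α * η) * (η * tp ^ (η-1)) -
            B * (β - α) / (α * β) * (β * tp ^ (β-1)))) tp := by
        have d1 : HasDerivAt (fun t : ℝ => t ^ η) (η * tp ^ (η - 1)) tp :=
          Real.hasDerivAt_rpow_const (Or.inl htp0.ne')
        have d2 : HasDerivAt (fun t : ℝ => t ^ β) (β * tp ^ (β - 1)) tp :=
          Real.hasDerivAt_rpow_const (Or.inl htp0.ne')
        have : HasDerivAt (hfun α η β N B c)
            (N * (η - α) / (α * η) * (η * tp ^ (η-1)) -
              B * (β - α) / (α * β) * (β * tp ^ (β-1))) tp :=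
          ((d1.const_mul _).sub (d2.const_mul _)).add_const c
        exact this.const_mul _
      have hdd : HasDerivAt (fun t : ℝ => A * t ^ (α+1)) (A * ((α+1) * tp ^ α)) tp := by
        have d3 : HasDerivAt (fun t : ℝ => t ^ (α+1)) ((α+1) * tp ^ (α+1-1)) tp :=
          Real.hasDerivAt_rpow_const (Or.inl htp0.ne')
        simpa using d3.const_mul A
      have hdenne : A * tp ^ (α+1) ≠ 0 := by
        have : (0:ℝ) < tp ^ (α+1) := Real.rpow_pos_of_pos htp0 _
        positivity
      have hD : deriv (fun t => α ^ 2 * hfun α η β N B c t / (A * t ^ (α + 1))) tp = _ :=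
        (hdh.div hdd hdenne).deriv
      rw [hD, htp]
      have e1 : (0:ℝ) < tp ^ (η-1) := Real.rpow_pos_of_pos htp0 _
      have e2 : (0:ℝ) < tp ^ (β-1) := Real.rpow_pos_of_pos htp0 _
      have e3 : (0:ℝ) < tp ^ (α+1) := Real.rpow_pos_of_pos htp0 _
      have hnum : 0 < N * (η - α) / (α * η) * (η * tp ^ (η-1)) -
          B * (β - α) / (α * β) * (β * tp ^ (β-1)) := by
        have p1 : 0 < N * (η - α) / (α * η) * (η * tp ^ (η-1)) :=
          mul_pos hC1 (mul_pos hη0 e1)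
        have p2 : 0 ≤ -(B * (β - α) / (α * β)) * (β * tp ^ (β-1)) :=
          mul_nonneg hC2 (mul_pos hβ0 e2).le
        nlinarith [p1, p2]
      simp only [mul_zero, zero_mul, sub_zero]
      apply div_pos
      · exact mul_pos (mul_pos (by positivity) hnum) (by positivity)
      · positivity
    · -- global strict minimum
      intro s hs hne
      have hcontOn : ∀ x : ℝ, 0 < x → ContinuousAt (fib α η β N A B c) x := fun x hx =>
        (fib_hasDerivAt α η β N A B c h1 h2 h3 hA x hx).differentiableAt.continuousAt
      rcases lt_or_gt_of_ne hne with hlt | hgt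
      · -- s < tp : fib strictly anti on [s, tp]
        have hanti : StrictAntiOn (fib α η β N A B c) (Set.Icc s tp) := by
          apply strictAntiOn_of_deriv_neg (convex_Icc s tp)
          · intro x hx
            exact (hcontOn x (lt_of_lt_of_le hs hx.1)).continuousWithinAt
          · intro x hx
            rw [interior_Icc] at hx
            have hx0 : 0 < x := lt_trans hs hx.1
            rw [deriv_fib_eq α η β N A B c h1 h2 h3 hA x hx0]
            have hneg := (hsign x hx0).1 hx.2
            have hxα : (0:ℝ) < x ^ (α+1) := Real.rpow_pos_of_pos hx0 _
            apply div_neg_of_neg_of_pos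
            · exact mul_neg_of_pos_of_neg (by positivity) hneg
            · positivity
        have := hanti (Set.mem_Icc.mpr ⟨le_refl s, hlt.le⟩)
          (Set.mem_Icc.mpr ⟨hlt.le, le_refl tp⟩) hlt
        linarith
      · -- tp < s : fib strictly mono on [tp, s]
        have hmono' : StrictMonoOn (fib α η β N A B c) (Set.Icc tp s) := by
          apply strictMonoOn_of_deriv_pos (convex_Icc tp s)
          · intro x hx
            exact (hcontOn x (lt_of_lt_of_le htp0 hx.1)).continuousWithinAt
          · intro x hx
            rw [interior_Icc] at hx
            have hx0 : 0 < x := lt_trans htp0 hx.1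
            rw [deriv_fib_eq α η β N A B c h1 h2 h3 hA x hx0]
            have hpos := (hsign x hx0).2 hx.1
            have hxα : (0:ℝ) < x ^ (α+1) := Real.rpow_pos_of_pos hx0 _
            positivity
        exact hmono' (Set.mem_Icc.mpr ⟨le_refl tp, hgt.le⟩)
          (Set.mem_Icc.mpr ⟨hgt.le, le_refl s⟩) hgt
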